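/- For every n ≥ 0, the polynomial S_n defined by the recursion S_{n+1}(x) = S_n(x) − (x²/((2n+3)(2n+5))) S_{n−1}(x) with S_{−1}(x) = S_0(x) = 1 satisfies the closed form S_n(x) = −(π x^{n+3/2} / (Γ(n+5/2) 2^{n+5/2})) · (cos(x) J_{n+5/2}(x) + sin(x) Y_{n+5/2}(x)) for all real x > 0. -/

import Mathlib

open Real

/-- Bessel function of the first kind of real order `ν` (for `x > 0`), via its series. -/
noncomputable def besselJ (ν x : ℝ) : ℝ :=
  ∑' k : ℕ, (-1) ^ k / ((k.factorial : ℝ) * Real.Gamma ((k : ℝ) + ν + 1)) *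
    (x / 2) ^ (2 * (k : ℝ) + ν)

/-- Bessel function of the second kind of real (non-integer) order `ν`. -/
noncomputable def besselY (ν x : ℝ) : ℝ :=
  (besselJ ν x * Real.cos (ν * π) - besselJ (-ν) x) / Real.sin (ν * π)



noncomputable def bt (ν x : ℝ) (k : ℕ) : ℝ :=
  (-1) ^ k / ((k.factorial : ℝ) * Real.Gamma ((k : ℝ) + ν + 1)) *
    (x / 2) ^ (2 * (k : ℝ) + ν)

lemma gamma_mono_aux (y : ℝ) (hy : 1 ≤ y) : ∀ k : ℕ, Real.Gamma y ≤ Real.Gamma (y + k) := by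
  intro k
  induction k with
  | zero => simp
  | succ k ih =>
    have h1 : (0:ℝ) < y + k := by positivity
    have : Real.Gamma (y + (k+1:ℕ)) = (y + k) * Real.Gamma (y + k) := by
      push_cast
      rw [show y + (k + 1 : ℝ) = (y + k) + 1 by ring, Real.Gamma_add_one (by positivity)]
    rw [this]
    calc Real.Gamma y ≤ Real.Gamma (y + k) := ih
    _ ≤ (y + k) * Real.Gamma (y + k) := by
        nlinarith [Real.Gamma_pos_of_pos h1, hy, (Nat.cast_nonneg k : (0:ℝ) ≤ k)]

lemma summable_bt (ν x : ℝ) (hx : 0 < x) : Summable (bt ν x) := by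
  obtain ⟨K, hK⟩ := exists_nat_ge (-ν)
  rw [← summable_nat_add_iff K]
  have hx2 : (0:ℝ) < x / 2 := by linarith
  have hKν : (0:ℝ) < (K:ℝ) + ν + 1 := by linarith
  have hGK : 0 < Real.Gamma ((K:ℝ) + ν + 1) := Real.Gamma_pos_of_pos hKν
  set C : ℝ := (x/2) ^ ν * (x/2) ^ (2*K) / Real.Gamma ((K:ℝ) + ν + 1) with hC
  have hsum : Summable (fun k : ℕ => C * ((x^2/4) ^ k / k.factorial)) :=
    (Real.summable_pow_div_factorial _).mul_left C
  apply Summable.of_abs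
  apply Summable.of_nonneg_of_le (fun k => abs_nonneg _) _ hsum
  intro k
  have hG : 0 < Real.Gamma (((k+K:ℕ):ℝ) + ν + 1) := by
    apply Real.Gamma_pos_of_pos; push_cast; linarith [Nat.cast_nonneg (α := ℝ) k]
  have hGle : Real.Gamma ((K:ℝ) + ν + 1) ≤ Real.Gamma (((k+K:ℕ):ℝ) + ν + 1) := by
    have := gamma_mono_aux ((K:ℝ) + ν + 1) (by linarith) k
    convert this using 2; push_cast; ring
  have hfle : (k.factorial : ℝ) ≤ ((k+K).factorial : ℝ) := by
    exact_mod_cast Nat.factorial_le (Nat.le_add_right k K)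
  have hfpos : (0:ℝ) < k.factorial := by exact_mod_cast k.factorial_pos
  have hrw : (x/2) ^ (2 * ((k+K:ℕ):ℝ) + ν) = (x/2) ^ ν * ((x/2)^(2*K) * ((x^2/4)) ^ k) := by
    rw [show 2 * ((k+K:ℕ):ℝ) + ν = ((2*(k+K) : ℕ) : ℝ) + ν by push_cast; ring,
      Real.rpow_add hx2, Real.rpow_natCast]
    have e1 : ((x/2):ℝ)^(2*k) = (x^2/4)^k := by
      rw [pow_mul]; congr 1; ring
    rw [show (2*(k+K)) = 2*K + 2*k by ring, pow_add, e1]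
    ring
  have habs : |bt ν x (k+K)| =
      (x/2) ^ (2 * ((k+K:ℕ):ℝ) + ν) / (((k+K).factorial : ℝ) * Real.Gamma (((k+K:ℕ):ℝ) + ν + 1)) := by
    unfold bt
    rw [abs_mul, abs_div, abs_pow, abs_neg, abs_one, one_pow,
      abs_of_pos (Real.rpow_pos_of_pos hx2 _),
      abs_of_pos (by positivity : (0:ℝ) < ((k+K).factorial : ℝ) * Real.Gamma (((k+K:ℕ):ℝ) + ν + 1))]
    ring
  rw [habs, hrw]
  rw [hC]
  rw [div_le_iff₀ (by positivity)]
  have key : (x/2)^ν * ((x/2)^(2*K) * (x^2/4)^k) * ((k.factorial:ℝ) * Real.Gamma ((K:ℝ)+ν+1))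
      ≤ (x/2)^ν * ((x/2)^(2*K) * (x^2/4)^k) * (((k+K).factorial:ℝ) * Real.Gamma (((k+K:ℕ):ℝ)+ν+1)) := by
    apply mul_le_mul_of_nonneg_left _ (by positivity)
    apply mul_le_mul hfle hGle (le_of_lt hGK) (by positivity)
  calc (x/2)^ν * ((x/2)^(2*K) * (x^2/4)^k)
      = ((x/2)^ν * ((x/2)^(2*K) * (x^2/4)^k) * ((k.factorial:ℝ) * Real.Gamma ((K:ℝ)+ν+1))) /
        ((k.factorial:ℝ) * Real.Gamma ((K:ℝ)+ν+1)) := by field_simp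
    _ ≤ ((x/2)^ν * ((x/2)^(2*K) * (x^2/4)^k) * (((k+K).factorial:ℝ) * Real.Gamma (((k+K:ℕ):ℝ)+ν+1))) /
        ((k.factorial:ℝ) * Real.Gamma ((K:ℝ)+ν+1)) := by
        apply div_le_div_of_nonneg_right key (by positivity) |>.trans_eq rfl
    _ = (x/2)^ν * (x/2)^(2*K) / Real.Gamma ((K:ℝ)+ν+1) * ((x^2/4)^k / k.factorial) *
        (((k+K).factorial:ℝ) * Real.Gamma (((k+K:ℕ):ℝ)+ν+1)) := by ring




lemma besselJ_eq (ν x : ℝ) : besselJ ν x = ∑' k : ℕ, bt ν x k := rfl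

lemma gamma_nz (ν : ℝ) (hν : ∀ j : ℤ, ν ≠ (j:ℝ)) (y : ℝ) (hy : ∃ j : ℤ, y = ν + j) :
    Real.Gamma y ≠ 0 := by
  obtain ⟨j, rfl⟩ := hy
  apply Real.Gamma_ne_zero
  intro m h
  exact hν (-m - j) (by push_cast at h ⊢; linarith)

lemma bt_rec_zero (ν x : ℝ) (hx : 0 < x) (hν : ∀ j : ℤ, ν ≠ (j:ℝ)) :
    bt (ν - 1) x 0 = (2 * ν / x) * bt ν x 0 := by
  have hν0 : ν ≠ 0 := fun h => hν 0 (by simp [h])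
  have hΓ : Real.Gamma ν ≠ 0 := gamma_nz ν hν ν ⟨0, by simp⟩
  unfold bt
  have h1 : (2:ℝ) * (0:ℕ) + ν = ν := by simp
  have h2 : (2:ℝ) * (0:ℕ) + (ν - 1) = ν - 1 := by simp
  rw [h1, h2]
  have h3 : ((0:ℕ):ℝ) + (ν-1) + 1 = ν := by simp
  have h4 : ((0:ℕ):ℝ) + ν + 1 = ν + 1 := by simp
  rw [h3, h4, Real.Gamma_add_one hν0]
  have h5 : (x/2) ^ ν = (x/2) ^ (ν - 1) * (x/2) := by
    rw [show ν = (ν - 1) + 1 by ring, Real.rpow_add_one (by positivity)]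
    ring_nf
  rw [h5]
  field_simp
  
lemma bt_rec_succ (ν x : ℝ) (hx : 0 < x) (hν : ∀ j : ℤ, ν ≠ (j:ℝ)) (k : ℕ) :
    bt (ν - 1) x (k + 1) + bt (ν + 1) x k = (2 * ν / x) * bt ν x (k + 1) := by
  have hΓ1 : Real.Gamma ((k:ℝ) + 1 + ν) ≠ 0 := gamma_nz ν hν _ ⟨k+1, by push_cast; ring⟩
  have hΓ2 : Real.Gamma ((k:ℝ) + ν + 1) ≠ 0 := gamma_nz ν hν _ ⟨k+1, by push_cast; ring⟩
  have hne : (k:ℝ) + ν + 1 ≠ 0 := fun h => hν (-(k+1)) (by push_cast; linarith)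
  unfold bt
  have e1 : ((k+1:ℕ):ℝ) + (ν-1) + 1 = (k:ℝ) + 1 + ν := by push_cast; ring
  have e2 : ((k:ℕ):ℝ) + (ν+1) + 1 = ((k:ℝ) + ν + 1) + 1 := by push_cast; ring
  have e3 : ((k+1:ℕ):ℝ) + ν + 1 = ((k:ℝ) + ν + 1) + 1 := by push_cast; ring
  have e4 : Real.Gamma ((k:ℝ)+1+ν) = Real.Gamma ((k:ℝ)+ν+1) := by ring_nf
  rw [e1, e2, e3, e4, Real.Gamma_add_one hne]
  have p1 : 2 * ((k+1:ℕ):ℝ) + (ν-1) = 2*(k:ℝ) + 1 + ν := by push_cast; ring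
  have p2 : 2 * ((k:ℕ):ℝ) + (ν+1) = 2*(k:ℝ) + 1 + ν := by push_cast; ring
  have p3 : 2 * ((k+1:ℕ):ℝ) + ν = (2*(k:ℝ) + 1 + ν) + 1 := by push_cast; ring
  rw [p1, p2, p3]
  have h5 : (x/2) ^ ((2*(k:ℝ) + 1 + ν) + 1) = (x/2) ^ (2*(k:ℝ)+1+ν) * (x/2) := by
    rw [Real.rpow_add_one (by positivity)]
  rw [h5]
  have hf1 : ((k+1).factorial : ℝ) = (k+1) * k.factorial := by
    rw [Nat.factorial_succ]; push_cast; ring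
  rw [hf1]
  have hfk : (k.factorial : ℝ) ≠ 0 := by positivity
  have hk1 : ((k:ℝ)+1) ≠ 0 := by positivity
  have hp : (-1:ℝ)^(k+1) = -(-1:ℝ)^k := by rw [pow_succ]; ring
  rw [hp]
  field_simp
  ring

lemma besselJ_rec (ν x : ℝ) (hx : 0 < x) (hν : ∀ j : ℤ, ν ≠ (j:ℝ)) :
    besselJ (ν - 1) x + besselJ (ν + 1) x = (2 * ν / x) * besselJ ν x := by
  classical
  set e : ℕ → ℝ := fun k => if k = 0 then 0 else bt (ν + 1) x (k - 1) with he
  have he1 : ∀ n : ℕ, e (n + 1) = bt (ν + 1) x n := by intro n; simp [he]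
  have hse : Summable e := by
    apply (summable_nat_add_iff 1).mp
    simp only [he1]
    exact summable_bt (ν+1) x hx
  have hE : besselJ (ν + 1) x = ∑' k, e k := by
    rw [Summable.tsum_eq_zero_add hse]
    simp only [he1]
    simp [he, besselJ_eq]
  rw [besselJ_eq (ν - 1), hE, ← Summable.tsum_add (summable_bt (ν-1) x hx) hse]
  rw [besselJ_eq, ← tsum_mul_left]
  congr 1
  funext k
  cases k with
  | zero => simpa [he] using bt_rec_zero ν x hx hν
  | succ n => simpa [he1] using bt_rec_succ ν x hx hν n





lemma gamma_half (k : ℕ) : Real.Gamma ((k:ℝ) + 1/2) =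
    Real.sqrt π * (2*k).factorial / (4^k * k.factorial) := by
  induction k with
  | zero => norm_num [Real.Gamma_one_half_eq]
  | succ k ih =>
    have hne : (k:ℝ) + 1/2 ≠ 0 := by positivity
    have h0 : ((k+1:ℕ):ℝ) + 1/2 = ((k:ℝ) + 1/2) + 1 := by push_cast; ring
    rw [h0, Real.Gamma_add_one hne, ih]
    have h1 : ((2*(k+1)).factorial:ℝ) = (2*(k:ℝ)+2) * ((2*(k:ℝ)+1) * (2*k).factorial) := by
      rw [show 2*(k+1) = (2*k+1)+1 by ring, Nat.factorial_succ, Nat.factorial_succ]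
      push_cast; ring
    have h2 : ((k+1).factorial:ℝ) = ((k:ℝ)+1) * k.factorial := by
      rw [Nat.factorial_succ]; push_cast; ring
    rw [h1, h2]
    have hfk : ((2*k).factorial : ℝ) ≠ 0 := by positivity
    have hfk2 : (k.factorial : ℝ) ≠ 0 := by positivity
    have h4 : (4:ℝ)^(k+1) = 4 * 4^k := by ring
    rw [h4]
    field_simp
    ring

lemma sqrt_aux (x : ℝ) (hx : 0 < x) :
    Real.sqrt (2/(π*x)) = Real.sqrt 2 / (Real.sqrt π * Real.sqrt x) := by
  rw [Real.sqrt_div (by norm_num), Real.sqrt_mul pi_pos.le]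

lemma sqrt_aux2 (x : ℝ) (hx : 0 < x) : Real.sqrt (x/2) = Real.sqrt x / Real.sqrt 2 := by
  rw [Real.sqrt_div hx.le]

lemma besselJ_half (x : ℝ) (hx : 0 < x) :
    besselJ (1/2) x = Real.sqrt (2/(π*x)) * Real.sin x := by
  rw [besselJ_eq, Real.sin_eq_tsum, ← tsum_mul_left]
  congr 1; funext k
  unfold bt
  have hΓ : ((k:ℝ) + 1/2 + 1) = ((k+1:ℕ):ℝ) + 1/2 := by push_cast; ring
  rw [hΓ, gamma_half (k+1)]
  have hexp : (x/2) ^ (2*(k:ℝ) + 1/2) = (x/2)^(2*k) * Real.sqrt (x/2) := by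
    rw [show 2*(k:ℝ) + 1/2 = ((2*k:ℕ):ℝ) + 1/2 by push_cast; ring,
      Real.rpow_add (by positivity), Real.rpow_natCast, ← Real.sqrt_eq_rpow]
  rw [hexp, sqrt_aux x hx, sqrt_aux2 x hx]
  have hp2 : ((x/2):ℝ)^(2*k) = x^(2*k)/4^k := by
    rw [div_pow]; congr 1; rw [pow_mul]; norm_num
  rw [hp2]
  have f1 : ((2*(k+1)).factorial:ℝ) = (2*(k:ℝ)+2) * (2*k+1).factorial := by
    rw [show 2*(k+1) = (2*k+1)+1 by ring, Nat.factorial_succ]; push_cast; ring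
  have f2 : ((k+1).factorial:ℝ) = ((k:ℝ)+1) * k.factorial := by
    rw [Nat.factorial_succ]; push_cast; ring
  have ha : Real.sqrt x * Real.sqrt x = x := Real.mul_self_sqrt hx.le
  have hc : Real.sqrt 2 * Real.sqrt 2 = 2 := Real.mul_self_sqrt (by norm_num)
  have hb0 : Real.sqrt π ≠ 0 := by positivity
  have ha0 : Real.sqrt x ≠ 0 := by positivity
  have hc0 : Real.sqrt 2 ≠ 0 := by positivity
  have hfk : (k.factorial:ℝ) ≠ 0 := by positivity
  have hfA : ((2*k+1).factorial:ℝ) ≠ 0 := by positivity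
  have h4k : (4:ℝ)^k ≠ 0 := by positivity
  have scalar1 : 2 * (Real.sqrt x / Real.sqrt 2) / Real.sqrt π
      = Real.sqrt 2 / (Real.sqrt π * Real.sqrt x) * x := by
    field_simp
    linear_combination 2*ha - x*hc
  calc (-1)^k / ((k.factorial:ℝ) * (Real.sqrt π * (2*(k+1)).factorial / (4^(k+1) * (k+1).factorial)))
        * (x^(2*k)/4^k * (Real.sqrt x / Real.sqrt 2))
      = ((-1)^k * x^(2*k) / (2*k+1).factorial) *
          (2 * (Real.sqrt x / Real.sqrt 2) / Real.sqrt π) := by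
        rw [f1, f2, show (4:ℝ)^(k+1) = 4*4^k by ring]
        field_simp
        ring
    _ = ((-1)^k * x^(2*k) / (2*k+1).factorial) *
          (Real.sqrt 2 / (Real.sqrt π * Real.sqrt x) * x) := by rw [scalar1]
    _ = Real.sqrt 2 / (Real.sqrt π * Real.sqrt x) * ((-1)^k * x^(2*k+1) / (2*k+1).factorial) := by
        rw [pow_succ]; ring

lemma besselJ_neg_half (x : ℝ) (hx : 0 < x) :
    besselJ (-(1/2)) x = Real.sqrt (2/(π*x)) * Real.cos x := by
  rw [besselJ_eq, Real.cos_eq_tsum, ← tsum_mul_left]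
  congr 1; funext k
  unfold bt
  have hΓ : ((k:ℝ) + -(1/2) + 1) = (k:ℝ) + 1/2 := by ring
  rw [hΓ, gamma_half k]
  have hexp : (x/2) ^ (2*(k:ℝ) + -(1/2)) = (x/2)^(2*k) / Real.sqrt (x/2) := by
    rw [show 2*(k:ℝ) + -(1/2) = ((2*k:ℕ):ℝ) + -(1/2) by push_cast; ring,
      Real.rpow_add (by positivity), Real.rpow_natCast, Real.rpow_neg (by positivity),
      ← Real.sqrt_eq_rpow]
    ring
  rw [hexp, sqrt_aux x hx, sqrt_aux2 x hx]
  have hp2 : ((x/2):ℝ)^(2*k) = x^(2*k)/4^k := by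
    rw [div_pow]; congr 1; rw [pow_mul]; norm_num
  rw [hp2]
  have hb0 : Real.sqrt π ≠ 0 := by positivity
  have ha0 : Real.sqrt x ≠ 0 := by positivity
  have hc0 : Real.sqrt 2 ≠ 0 := by positivity
  have hfk : (k.factorial:ℝ) ≠ 0 := by positivity
  have hfA : ((2*k).factorial:ℝ) ≠ 0 := by positivity
  have h4k : (4:ℝ)^k ≠ 0 := by positivity
  field_simp









lemma half_ne_int (m j : ℤ) : ((m:ℝ) + 1/2) ≠ (j:ℝ) := by
  intro h
  have h2 : ((2*m+1 : ℤ) : ℝ) = ((2*j : ℤ) : ℝ) := by push_cast; linarith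
  have h3 : (2*m+1 : ℤ) = 2*j := Int.cast_injective h2
  omega

lemma besselJ_rec' (c : ℤ) (x : ℝ) (hx : 0 < x) :
    besselJ ((c:ℝ) + 1/2 - 1) x + besselJ ((c:ℝ) + 1/2 + 1) x =
      (2 * ((c:ℝ) + 1/2) / x) * besselJ ((c:ℝ) + 1/2) x :=
  besselJ_rec _ x hx (half_ne_int c)

noncomputable def FF2 (m : ℕ) (x : ℝ) : ℝ :=
  Real.cos x * besselJ ((m:ℝ) + 3/2) x + (-1)^m * Real.sin x * besselJ (-((m:ℝ) + 3/2)) x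

lemma cos_nat_pi (n : ℕ) : Real.cos ((n:ℝ) * π) = (-1)^n := by
  induction n with
  | zero => simp
  | succ n ih => push_cast; rw [add_mul, one_mul, Real.cos_add]; simp [ih]; ring

lemma Y_red (n : ℕ) (x : ℝ) :
    Real.cos x * besselJ ((n:ℝ) + 5/2) x + Real.sin x * besselY ((n:ℝ) + 5/2) x =
      FF2 (n+1) x := by
  have hs : Real.sin (((n:ℝ) + 5/2) * π) = (-1)^n := by
    rw [show ((n:ℝ)+5/2)*π = ((n:ℝ)*π + π/2) + 2*π by ring, Real.sin_add_two_pi,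
      Real.sin_add_pi_div_two, cos_nat_pi]
  have hc : Real.cos (((n:ℝ) + 5/2) * π) = 0 := by
    rw [show ((n:ℝ)+5/2)*π = ((n:ℝ)*π + π/2) + 2*π by ring, Real.cos_add_two_pi,
      Real.cos_add_pi_div_two, Real.sin_nat_mul_pi, neg_zero]
  have hpow : ((-1:ℝ))^n * ((-1:ℝ))^n = 1 := by
    rw [← pow_add, ← two_mul, pow_mul]; norm_num
  unfold besselY FF2
  rw [hs, hc]
  have h1 : ((n+1:ℕ):ℝ) + 3/2 = (n:ℝ) + 5/2 := by push_cast; ring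
  rw [h1]
  have hne : ((-1:ℝ))^n ≠ 0 := by
    intro h; rw [h] at hpow; simp at hpow
  set A := besselJ (-((n:ℝ)+5/2)) x with hA
  set B := besselJ ((n:ℝ)+5/2) x with hB
  field_simp
  rw [pow_succ]
  linear_combination (Real.sin x * A) * hpow

lemma FF2_rec (m : ℕ) (x : ℝ) (hx : 0 < x) :
    FF2 (m+2) x = (2*((m:ℝ)+5/2)/x) * FF2 (m+1) x - FF2 m x := by
  have hpos := besselJ_rec' ((m:ℤ)+2) x hx
  have hneg := besselJ_rec' (-(m:ℤ)-3) x hx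
  push_cast at hpos hneg
  have e1 : (m:ℝ) + 2 + 1/2 - 1 = (m:ℝ) + 3/2 := by ring
  have e2 : (m:ℝ) + 2 + 1/2 + 1 = ((m+2:ℕ):ℝ) + 3/2 := by push_cast; ring
  have e3 : (m:ℝ) + 2 + 1/2 = ((m+1:ℕ):ℝ) + 3/2 := by push_cast; ring
  rw [e1, e2, e3] at hpos
  have f1 : -(m:ℝ) - 3 + 1/2 - 1 = -(((m+2:ℕ):ℝ) + 3/2) := by push_cast; ring
  have f2 : -(m:ℝ) - 3 + 1/2 + 1 = -((m:ℝ) + 3/2) := by push_cast; ring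
  have f3 : -(m:ℝ) - 3 + 1/2 = -(((m+1:ℕ):ℝ) + 3/2) := by push_cast; ring
  rw [f1, f2, f3] at hneg
  unfold FF2
  have hm2 : ((m+2:ℕ):ℝ) + 3/2 = ((m:ℝ)+3/2) + 2 := by push_cast; ring
  have hp2 : ((-1:ℝ))^(m+2) = (-1)^m := by rw [pow_succ, pow_succ]; ring
  have hp1 : ((-1:ℝ))^(m+1) = -(-1)^m := by rw [pow_succ]; ring
  rw [hp2, hp1]
  have hJ : besselJ (((m+2:ℕ):ℝ) + 3/2) x =
      (2*(((m+1:ℕ):ℝ)+3/2)/x) * besselJ (((m+1:ℕ):ℝ) + 3/2) x - besselJ ((m:ℝ)+3/2) x := by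
    linarith [hpos]
  have hJn : besselJ (-(((m+2:ℕ):ℝ) + 3/2)) x =
      (2*(-(((m+1:ℕ):ℝ)+3/2))/x) * besselJ (-(((m+1:ℕ):ℝ) + 3/2)) x - besselJ (-((m:ℝ)+3/2)) x := by
    linarith [hneg]
  rw [hJ, hJn]
  have hmm : ((m+1:ℕ):ℝ) + 3/2 = (m:ℝ) + 5/2 := by push_cast; ring
  rw [hmm]
  field_simp
  ring

lemma FF2_one (x : ℝ) (hx : 0 < x) :
    FF2 1 x = -3 * Real.sqrt (2/(π*x)) / x := by
  have hx0 : x ≠ 0 := ne_of_gt hx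
  have hJh := besselJ_half x hx
  have hJnh := besselJ_neg_half x hx
  have r1 := besselJ_rec' 0 x hx
  rw [show ((0:ℤ):ℝ)+1/2-1 = -(1/2) by norm_num, show ((0:ℤ):ℝ)+1/2+1 = 3/2 by norm_num,
    show ((0:ℤ):ℝ)+1/2 = 1/2 by norm_num] at r1
  have r3 := besselJ_rec' 1 x hx
  rw [show ((1:ℤ):ℝ)+1/2-1 = 1/2 by norm_num, show ((1:ℤ):ℝ)+1/2+1 = 5/2 by norm_num,
    show ((1:ℤ):ℝ)+1/2 = 3/2 by norm_num] at r3
  have r2 := besselJ_rec' (-1) x hx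
  rw [show ((-1:ℤ):ℝ)+1/2-1 = -(3/2) by norm_num, show ((-1:ℤ):ℝ)+1/2+1 = 1/2 by norm_num,
    show ((-1:ℤ):ℝ)+1/2 = -(1/2) by norm_num] at r2
  have r4 := besselJ_rec' (-2) x hx
  rw [show ((-2:ℤ):ℝ)+1/2-1 = -(5/2) by norm_num, show ((-2:ℤ):ℝ)+1/2+1 = -(1/2) by norm_num,
    show ((-2:ℤ):ℝ)+1/2 = -(3/2) by norm_num] at r4
  have hJ52 : besselJ (5/2) x = 2*(3/2)/x * besselJ (3/2) x - besselJ (1/2) x := by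
    linarith [r3]
  have hJn52 : besselJ (-(5/2)) x = 2*(-(3/2))/x * besselJ (-(3/2)) x - besselJ (-(1/2)) x := by
    linarith [r4]
  have hJ32 : besselJ (3/2) x = 2*(1/2)/x * besselJ (1/2) x - besselJ (-(1/2)) x := by
    linarith [r1]
  have hJn32 : besselJ (-(3/2)) x = 2*(-(1/2))/x * besselJ (-(1/2)) x - besselJ (1/2) x := by
    linarith [r2]
  unfold FF2
  rw [show ((1:ℕ):ℝ)+3/2 = 5/2 by norm_num]
  rw [hJ52, hJn52, hJ32, hJn32, hJh, hJnh]
  rw [pow_one]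
  linear_combination (-3*Real.sqrt (2/(π*x))/x) * Real.sin_sq_add_cos_sq x

lemma FF2_two (x : ℝ) (hx : 0 < x) :
    FF2 2 x = Real.sqrt (2/(π*x)) * (1 - 15/x^2) := by
  have hx0 : x ≠ 0 := ne_of_gt hx
  have hJh := besselJ_half x hx
  have hJnh := besselJ_neg_half x hx
  have r1 := besselJ_rec' 0 x hx
  rw [show ((0:ℤ):ℝ)+1/2-1 = -(1/2) by norm_num, show ((0:ℤ):ℝ)+1/2+1 = 3/2 by norm_num,
    show ((0:ℤ):ℝ)+1/2 = 1/2 by norm_num] at r1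
  have r3 := besselJ_rec' 1 x hx
  rw [show ((1:ℤ):ℝ)+1/2-1 = 1/2 by norm_num, show ((1:ℤ):ℝ)+1/2+1 = 5/2 by norm_num,
    show ((1:ℤ):ℝ)+1/2 = 3/2 by norm_num] at r3
  have r5 := besselJ_rec' 2 x hx
  rw [show ((2:ℤ):ℝ)+1/2-1 = 3/2 by norm_num, show ((2:ℤ):ℝ)+1/2+1 = 7/2 by norm_num,
    show ((2:ℤ):ℝ)+1/2 = 5/2 by norm_num] at r5
  have r2 := besselJ_rec' (-1) x hx
  rw [show ((-1:ℤ):ℝ)+1/2-1 = -(3/2) by norm_num, show ((-1:ℤ):ℝ)+1/2+1 = 1/2 by norm_num,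
    show ((-1:ℤ):ℝ)+1/2 = -(1/2) by norm_num] at r2
  have r4 := besselJ_rec' (-2) x hx
  rw [show ((-2:ℤ):ℝ)+1/2-1 = -(5/2) by norm_num, show ((-2:ℤ):ℝ)+1/2+1 = -(1/2) by norm_num,
    show ((-2:ℤ):ℝ)+1/2 = -(3/2) by norm_num] at r4
  have r6 := besselJ_rec' (-3) x hx
  rw [show ((-3:ℤ):ℝ)+1/2-1 = -(7/2) by norm_num, show ((-3:ℤ):ℝ)+1/2+1 = -(3/2) by norm_num,
    show ((-3:ℤ):ℝ)+1/2 = -(5/2) by norm_num] at r6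
  have hJ72 : besselJ (7/2) x = 2*(5/2)/x * besselJ (5/2) x - besselJ (3/2) x := by
    linarith [r5]
  have hJn72 : besselJ (-(7/2)) x = 2*(-(5/2))/x * besselJ (-(5/2)) x - besselJ (-(3/2)) x := by
    linarith [r6]
  have hJ52 : besselJ (5/2) x = 2*(3/2)/x * besselJ (3/2) x - besselJ (1/2) x := by
    linarith [r3]
  have hJn52 : besselJ (-(5/2)) x = 2*(-(3/2))/x * besselJ (-(3/2)) x - besselJ (-(1/2)) x := by
    linarith [r4]
  have hJ32 : besselJ (3/2) x = 2*(1/2)/x * besselJ (1/2) x - besselJ (-(1/2)) x := by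
    linarith [r1]
  have hJn32 : besselJ (-(3/2)) x = 2*(-(1/2))/x * besselJ (-(1/2)) x - besselJ (1/2) x := by
    linarith [r2]
  unfold FF2
  rw [show ((2:ℕ):ℝ)+3/2 = 7/2 by norm_num]
  rw [hJ72, hJn72, hJ52, hJn52, hJ32, hJn32, hJh, hJnh]
  rw [show ((-1:ℝ))^2 = 1 by norm_num, one_mul]
  linear_combination (Real.sqrt (2/(π*x)) * (1 - 15/x^2)) * Real.sin_sq_add_cos_sq x

noncomputable def cc (n : ℕ) (x : ℝ) : ℝ :=
  -(π * x ^ ((n : ℝ) + 3 / 2) / (Real.Gamma ((n : ℝ) + 5 / 2) * (2 : ℝ) ^ ((n : ℝ) + 5 / 2)))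

lemma cc_succ (n : ℕ) (x : ℝ) (hx : 0 < x) :
    cc (n+1) x = cc n x * (x / (2 * ((n:ℝ) + 5/2))) := by
  unfold cc
  have h1 : ((n+1:ℕ):ℝ) + 3/2 = ((n:ℝ) + 3/2) + 1 := by push_cast; ring
  have h2 : ((n+1:ℕ):ℝ) + 5/2 = ((n:ℝ) + 5/2) + 1 := by push_cast; ring
  rw [h1, h2, Real.rpow_add_one (ne_of_gt hx), Real.rpow_add_one (two_ne_zero),
    Real.Gamma_add_one (by positivity)]
  have hG : Real.Gamma ((n:ℝ) + 5/2) ≠ 0 := ne_of_gt (Real.Gamma_pos_of_pos (by positivity))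
  have h2p : (2:ℝ) ^ ((n:ℝ) + 5/2) ≠ 0 := ne_of_gt (Real.rpow_pos_of_pos two_pos _)
  have hn : (n:ℝ) + 5/2 ≠ 0 := by positivity
  field_simp

lemma x32 (x : ℝ) (hx : 0 < x) : x ^ ((3:ℝ)/2) = x * Real.sqrt x := by
  rw [show (3:ℝ)/2 = 1 + 1/2 by norm_num, Real.rpow_add hx, Real.rpow_one, ← Real.sqrt_eq_rpow]

lemma x52 (x : ℝ) (hx : 0 < x) : x ^ ((5:ℝ)/2) = x^2 * Real.sqrt x := by
  rw [show (5:ℝ)/2 = ((2:ℕ):ℝ) + 1/2 by norm_num, Real.rpow_add hx, ← Real.sqrt_eq_rpow,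
    Real.rpow_natCast]

lemma two52 : (2:ℝ) ^ ((5:ℝ)/2) = 4 * Real.sqrt 2 := by
  rw [show (5:ℝ)/2 = ((2:ℕ):ℝ) + 1/2 by norm_num, Real.rpow_add two_pos, ← Real.sqrt_eq_rpow,
    Real.rpow_natCast]
  norm_num

lemma two72 : (2:ℝ) ^ ((7:ℝ)/2) = 8 * Real.sqrt 2 := by
  rw [show (7:ℝ)/2 = ((3:ℕ):ℝ) + 1/2 by norm_num, Real.rpow_add two_pos, ← Real.sqrt_eq_rpow,
    Real.rpow_natCast]
  norm_num

lemma base0 (x : ℝ) (hx : 0 < x) : cc 0 x * FF2 1 x = 1 := by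
  have hx0 : x ≠ 0 := ne_of_gt hx
  have ha : Real.sqrt x * Real.sqrt x = x := Real.mul_self_sqrt hx.le
  have hpi : Real.sqrt π * Real.sqrt π = π := Real.mul_self_sqrt pi_pos.le
  have hc : Real.sqrt 2 * Real.sqrt 2 = 2 := Real.mul_self_sqrt (by norm_num)
  have hb0 : Real.sqrt π ≠ 0 := by positivity
  have ha0 : Real.sqrt x ≠ 0 := by positivity
  have hc0 : Real.sqrt 2 ≠ 0 := by positivity
  unfold cc
  rw [FF2_one x hx, show ((0:ℕ):ℝ) + 3/2 = (3:ℝ)/2 by norm_num,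
    show ((0:ℕ):ℝ) + 5/2 = ((2:ℕ):ℝ) + 1/2 by norm_num, gamma_half 2,
    show (((2:ℕ)):ℝ) + 1/2 = (5:ℝ)/2 by norm_num,
    x32 x hx, two52, sqrt_aux x hx]
  norm_num [Nat.factorial]
  field_simp
  linear_combination (-96)*hpi

lemma base1 (x : ℝ) (hx : 0 < x) : cc 1 x * FF2 2 x = 1 - x^2/15 := by
  have hx0 : x ≠ 0 := ne_of_gt hx
  have ha : Real.sqrt x * Real.sqrt x = x := Real.mul_self_sqrt hx.le
  have hpi : Real.sqrt π * Real.sqrt π = π := Real.mul_self_sqrt pi_pos.le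
  have hc : Real.sqrt 2 * Real.sqrt 2 = 2 := Real.mul_self_sqrt (by norm_num)
  have hb0 : Real.sqrt π ≠ 0 := by positivity
  have ha0 : Real.sqrt x ≠ 0 := by positivity
  have hc0 : Real.sqrt 2 ≠ 0 := by positivity
  unfold cc
  rw [FF2_two x hx, show ((1:ℕ):ℝ) + 3/2 = (5:ℝ)/2 by norm_num,
    show ((1:ℕ):ℝ) + 5/2 = ((3:ℕ):ℝ) + 1/2 by norm_num, gamma_half 3,
    show (((3:ℕ)):ℝ) + 1/2 = (7:ℝ)/2 by norm_num,
    x52 x hx, two72, sqrt_aux x hx]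
  norm_num [Nat.factorial]
  field_simp
  linear_combination (5760*x^2 - 86400)*hpi

theorem S_closed_form (T : ℕ → ℝ → ℝ)
    (hT0 : ∀ x, T 0 x = 1) (hT1 : ∀ x, T 1 x = 1)
    (hTrec : ∀ (n : ℕ) (x : ℝ),
      T (n + 2) x = T (n + 1) x - x ^ 2 / ((2 * (n : ℝ) + 3) * (2 * (n : ℝ) + 5)) * T n x) :
    ∀ (n : ℕ) (x : ℝ), 0 < x →
      T (n + 1) x = -(π * x ^ ((n : ℝ) + 3 / 2) /
          (Real.Gamma ((n : ℝ) + 5 / 2) * (2 : ℝ) ^ ((n : ℝ) + 5 / 2))) *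
        (Real.cos x * besselJ ((n : ℝ) + 5 / 2) x + Real.sin x * besselY ((n : ℝ) + 5 / 2) x) := by
  have key : ∀ n : ℕ, (∀ x : ℝ, 0 < x → T (n+1) x = cc n x * FF2 (n+1) x) ∧
      (∀ x : ℝ, 0 < x → T (n+2) x = cc (n+1) x * FF2 (n+2) x) := by
    intro n
    induction n with
    | zero =>
      constructor
      · intro x hx
        rw [hT1 x, base0 x hx]
      · intro x hx
        have h2 : T 2 x = 1 - x^2/15 := by
          have := hTrec 0 x
          rw [hT1 x, hT0 x] at this
          norm_num at this
          linarith
        rw [h2, base1 x hx]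
    | succ n ih =>
      refine ⟨ih.2, ?_⟩
      intro x hx
      have hx0 : x ≠ 0 := ne_of_gt hx
      have hT : T (n+3) x = T (n+2) x -
          x^2/((2*((n+1:ℕ):ℝ)+3)*(2*((n+1:ℕ):ℝ)+5)) * T (n+1) x := hTrec (n+1) x
      have hF : FF2 (n+3) x = (2*((((n+1:ℕ)):ℝ) + 5/2)/x) * FF2 (n+2) x - FF2 (n+1) x :=
        FF2_rec (n+1) x hx
      have i1 : T (n+1) x = cc n x * FF2 (n+1) x := ih.1 x hx
      have i2 : T (n+2) x = cc (n+1) x * FF2 (n+2) x := ih.2 x hx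
      have c2 : cc (n+2) x = cc (n+1) x * (x / (2 * ((((n+1:ℕ)):ℝ) + 5/2))) := cc_succ (n+1) x hx
      have c1 : cc (n+1) x = cc n x * (x / (2 * ((n:ℝ) + 5/2))) := cc_succ n x hx
      show T (n+3) x = cc (n+2) x * FF2 (n+3) x
      rw [hT, i1, i2, hF, c2, c1]
      push_cast
      have h5 : (2*(n:ℝ)+5) ≠ 0 := by positivity
      have h7 : (2*(n:ℝ)+7) ≠ 0 := by positivity
      field_simp
      ring
  intro n x hx
  have h := (key n).1 x hx
  rw [Y_red n x] at *
  exact h
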